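/- Let N ≥ 1 and p > 1. Let E := Matrix (Fin N) (Fin N) ℝ be equipped with the Frobenius inner product ⟪ξ, η⟫ = tr(ξᵀη), and for ξ ∈ E write ξˢ := (ξ + ξᵀ)/2. Let A : E →L[ℝ] E be a continuous linear map that is symmetric (⟪Aξ, η⟫ = ⟪ξ, Aη⟫ for all ξ, η ∈ E) and satisfies ⟪Aζ, ζ⟫ ≥ 0 for every symmetric matrix ζ. Then for all ξ, η ∈ E, |⟪Aξˢ, ξˢ⟫^{p/2} − ⟪Aηˢ, ηˢ⟫^{p/2}| ≤ p · (⟪Aξˢ, ξˢ⟫^{1/2} + ⟪Aηˢ, ηˢ⟫^{1/2})^{p−1} · ‖A‖^{1/2} · ‖ξ − η‖, where ‖A‖ is the operator norm of A and ‖·‖ the Frobenius norm. -/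

import Mathlib

open Matrix

attribute [local instance] Matrix.frobeniusNormedAddCommGroup Matrix.frobeniusNormedSpace

/-- The Frobenius inner product of two real square matrices: `⟪ξ, η⟫ = tr(ξᵀη)`. -/
noncomputable def finner {N : ℕ} (ξ η : Matrix (Fin N) (Fin N) ℝ) : ℝ :=
  (ξᵀ * η).trace

/-- The symmetric part `ξˢ = (ξ + ξᵀ)/2` of a square matrix. -/
noncomputable def symPart {N : ℕ} (ξ : Matrix (Fin N) (Fin N) ℝ) :
    Matrix (Fin N) (Fin N) ℝ :=
  (1 / 2 : ℝ) • (ξ + ξᵀ)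

lemma finner_eq_sum {N : ℕ} (ξ η : Matrix (Fin N) (Fin N) ℝ) :
    finner ξ η = ∑ j, ∑ i, ξ i j * η i j := by
  simp [finner, Matrix.trace, Matrix.diag, Matrix.mul_apply, Matrix.transpose_apply]

lemma finner_comm {N : ℕ} (ξ η : Matrix (Fin N) (Fin N) ℝ) :
    finner ξ η = finner η ξ := by
  simp only [finner_eq_sum]
  exact Finset.sum_congr rfl fun j _ => Finset.sum_congr rfl fun i _ => mul_comm _ _

lemma finner_add_left {N : ℕ} (ξ ξ' η : Matrix (Fin N) (Fin N) ℝ) :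
    finner (ξ + ξ') η = finner ξ η + finner ξ' η := by
  simp [finner, Matrix.transpose_add, Matrix.add_mul]

lemma finner_add_right {N : ℕ} (ξ η η' : Matrix (Fin N) (Fin N) ℝ) :
    finner ξ (η + η') = finner ξ η + finner ξ η' := by
  simp [finner, Matrix.mul_add]

lemma finner_smul_left {N : ℕ} (t : ℝ) (ξ η : Matrix (Fin N) (Fin N) ℝ) :
    finner (t • ξ) η = t * finner ξ η := by
  simp [finner, Matrix.transpose_smul, Matrix.smul_mul]

lemma finner_smul_right {N : ℕ} (t : ℝ) (ξ η : Matrix (Fin N) (Fin N) ℝ) :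
    finner ξ (t • η) = t * finner ξ η := by
  simp [finner, Matrix.mul_smul]

lemma norm_eq_sqrt_finner {N : ℕ} (ξ : Matrix (Fin N) (Fin N) ℝ) :
    ‖ξ‖ = Real.sqrt (finner ξ ξ) := by
  rw [Matrix.frobenius_norm_def, finner_eq_sum, Real.sqrt_eq_rpow]
  congr 1
  rw [Finset.sum_comm]
  refine Finset.sum_congr rfl fun j _ => Finset.sum_congr rfl fun i _ => ?_
  rw [show ((2:ℝ)) = ((2:ℕ):ℝ) by norm_num, Real.rpow_natCast]
  rw [Real.norm_eq_abs, sq_abs, sq]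

lemma finner_le_norm {N : ℕ} (ξ η : Matrix (Fin N) (Fin N) ℝ) :
    finner ξ η ≤ ‖ξ‖ * ‖η‖ := by
  rw [finner_eq_sum, norm_eq_sqrt_finner, norm_eq_sqrt_finner, finner_eq_sum, finner_eq_sum]
  calc ∑ j, ∑ i, ξ i j * η i j
      = ∑ p : Fin N × Fin N, ξ p.2 p.1 * η p.2 p.1 := by
        rw [← Finset.sum_product', Finset.univ_product_univ]
    _ ≤ Real.sqrt (∑ p : Fin N × Fin N, (ξ p.2 p.1) ^ 2) *
        Real.sqrt (∑ p : Fin N × Fin N, (η p.2 p.1) ^ 2) :=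
        Real.sum_mul_le_sqrt_mul_sqrt _ _ _
    _ = _ := by
        rw [← Finset.sum_product', ← Finset.sum_product', Finset.univ_product_univ]
        simp_rw [sq]

lemma rpow_mvt {p a b : ℝ} (hp : 1 < p) (hb : 0 ≤ b) (hba : b ≤ a) :
    a ^ p - b ^ p ≤ p * (a + b) ^ (p - 1) * (a - b) := by
  rcases eq_or_lt_of_le hba with rfl | h
  · simp
  · obtain ⟨c, hc, hc'⟩ := exists_hasDerivAt_eq_slope (fun x => x ^ p)
      (fun x => p * x ^ (p - 1)) h
      (fun x _ => (Real.hasDerivAt_rpow_const (Or.inr hp.le)).continuousAt.continuousWithinAt)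
      (fun x _ => Real.hasDerivAt_rpow_const (Or.inr hp.le))
  -- hc' : p * c ^ (p-1) = (a^p - b^p) / (a - b)
    have hab : a - b ≠ 0 := sub_ne_zero.2 (ne_of_gt h)
    have heq : a ^ p - b ^ p = p * c ^ (p - 1) * (a - b) := by
      field_simp at hc'
      linarith [hc']
    rw [heq]
    have hc0 : (0:ℝ) ≤ c := hb.trans hc.1.le
    have hcab : c ≤ a + b := le_add_of_le_of_nonneg hc.2.le hb
    have : c ^ (p - 1) ≤ (a + b) ^ (p - 1) :=
      Real.rpow_le_rpow hc0 hcab (by linarith)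
    have hp0 : (0:ℝ) < p := lt_trans one_pos hp
    exact mul_le_mul_of_nonneg_right (mul_le_mul_of_nonneg_left this hp0.le) (by linarith)

/-- The mean-value estimate established in the proof of Example 1 for the density
`F(ξ) = (Aξˢ : ξˢ)^(p/2)`. Here `A.opNorm` is the operator norm of `A` with respect to
the Frobenius norm, and `‖ξ - η‖` is the Frobenius norm. -/
theorem example1_mean_value_estimate {N : ℕ} (hN : 1 ≤ N) (p : ℝ) (hp : 1 < p)
    (A : Matrix (Fin N) (Fin N) ℝ →L[ℝ] Matrix (Fin N) (Fin N) ℝ)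
    (hAsymm : ∀ ξ η : Matrix (Fin N) (Fin N) ℝ, finner (A ξ) η = finner ξ (A η))
    (hApos : ∀ ζ : Matrix (Fin N) (Fin N) ℝ, ζᵀ = ζ → 0 ≤ finner (A ζ) ζ) :
    ∀ ξ η : Matrix (Fin N) (Fin N) ℝ,
      |finner (A (symPart ξ)) (symPart ξ) ^ (p / 2) -
          finner (A (symPart η)) (symPart η) ^ (p / 2)| ≤
        p * (finner (A (symPart ξ)) (symPart ξ) ^ ((1 : ℝ) / 2) +
              finner (A (symPart η)) (symPart η) ^ ((1 : ℝ) / 2)) ^ (p - 1) *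
          A.opNorm ^ ((1 : ℝ) / 2) * ‖ξ - η‖ := by
  -- basic facts about Q u := finner (A u) u
  have hsymT : ∀ ζ : Matrix (Fin N) (Fin N) ℝ, (symPart ζ)ᵀ = symPart ζ := by
    intro ζ
    simp [symPart, Matrix.transpose_smul, Matrix.transpose_add, add_comm]
  -- Cauchy–Schwarz for the bilinear form B(u,v) = finner (A u) v on symmetric matrices
  have hB : ∀ u v : Matrix (Fin N) (Fin N) ℝ, uᵀ = u → vᵀ = v →
      finner (A u) v ≤ Real.sqrt (finner (A u) u) * Real.sqrt (finner (A v) v) := by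
    intro u v hu hv
    have key : ∀ t : ℝ, 0 ≤ finner (A v) v * (t * t) + (2 * finner (A u) v) * t
        + finner (A u) u := by
      intro t
      have hs : (u + t • v)ᵀ = u + t • v := by
        rw [Matrix.transpose_add, Matrix.transpose_smul, hu, hv]
      have h0 := hApos (u + t • v) hs
      have hexp : finner (A (u + t • v)) (u + t • v)
          = finner (A v) v * (t * t) + (2 * finner (A u) v) * t + finner (A u) u := by
        rw [map_add, _root_.map_smul, finner_add_left, finner_add_right, finner_add_right,
          finner_smul_left, finner_smul_right, finner_smul_right, finner_smul_left]
        have h1 : finner (A v) u = finner (A u) v := by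
          rw [hAsymm, finner_comm]
        rw [h1]; ring
      rw [hexp] at h0; exact h0
    have hd := discrim_le_zero key
    rw [discrim] at hd
    have hsq : (finner (A u) v) ^ 2 ≤ finner (A u) u * finner (A v) v := by nlinarith
    calc finner (A u) v ≤ |finner (A u) v| := le_abs_self _
      _ = Real.sqrt ((finner (A u) v) ^ 2) := (Real.sqrt_sq_eq_abs _).symm
      _ ≤ Real.sqrt (finner (A u) u * finner (A v) v) := Real.sqrt_le_sqrt hsq
      _ = _ := Real.sqrt_mul (hApos u hu) _
  -- subadditivity of u ↦ √(Q u) on symmetric matrices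
  have hQadd : ∀ u v : Matrix (Fin N) (Fin N) ℝ, uᵀ = u → vᵀ = v →
      Real.sqrt (finner (A (u + v)) (u + v))
        ≤ Real.sqrt (finner (A u) u) + Real.sqrt (finner (A v) v) := by
    intro u v hu hv
    have hexp : finner (A (u + v)) (u + v)
        = finner (A u) u + 2 * finner (A u) v + finner (A v) v := by
      rw [map_add, finner_add_left, finner_add_right, finner_add_right]
      have h1 : finner (A v) u = finner (A u) v := by rw [hAsymm, finner_comm]
      rw [h1]; ring
    have hle : finner (A (u + v)) (u + v)
        ≤ (Real.sqrt (finner (A u) u) + Real.sqrt (finner (A v) v)) ^ 2 := by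
      rw [hexp, add_sq, Real.sq_sqrt (hApos u hu), Real.sq_sqrt (hApos v hv)]
      have := hB u v hu hv
      nlinarith
    calc Real.sqrt (finner (A (u + v)) (u + v))
        ≤ Real.sqrt ((Real.sqrt (finner (A u) u) + Real.sqrt (finner (A v) v)) ^ 2) :=
          Real.sqrt_le_sqrt hle
      _ = _ := by
          rw [Real.sqrt_sq (by positivity)]
  -- bound √(Q z) ≤ √A.opNorm * ‖z‖
  have hQbound : ∀ z : Matrix (Fin N) (Fin N) ℝ,
      Real.sqrt (finner (A z) z) ≤ Real.sqrt A.opNorm * ‖z‖ := by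
    intro z
    have h1 : finner (A z) z ≤ A.opNorm * ‖z‖ ^ 2 := by
      calc finner (A z) z ≤ ‖A z‖ * ‖z‖ := finner_le_norm _ _
        _ ≤ (A.opNorm * ‖z‖) * ‖z‖ := by
            have : ‖A z‖ ≤ A.opNorm * ‖z‖ := A.le_opNorm z
            nlinarith [norm_nonneg z]
        _ = A.opNorm * ‖z‖ ^ 2 := by ring
    calc Real.sqrt (finner (A z) z) ≤ Real.sqrt (A.opNorm * ‖z‖ ^ 2) := Real.sqrt_le_sqrt h1
      _ = Real.sqrt A.opNorm * ‖z‖ := by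
          rw [Real.sqrt_mul (x := A.opNorm) (by exact A.opNorm_nonneg), Real.sqrt_sq (norm_nonneg z)]
  intro ξ η
  set x := symPart ξ with hx
  set y := symPart η with hy
  have hxT := hsymT ξ
  have hyT := hsymT η
  set a := Real.sqrt (finner (A x) x) with ha
  set b := Real.sqrt (finner (A y) y) with hb
  have ha0 : 0 ≤ a := Real.sqrt_nonneg _
  have hb0 : 0 ≤ b := Real.sqrt_nonneg _
  -- |a - b| ≤ √A.opNorm * ‖ξ - η‖
  have hdiff : |a - b| ≤ Real.sqrt A.opNorm * ‖ξ - η‖ := by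
    have hxy : x - y = symPart (ξ - η) := by
      simp [hx, hy, symPart, Matrix.transpose_sub, smul_sub]
      abel
    have hxyT : (x - y)ᵀ = x - y := by rw [hxy]; exact hsymT _
    have hnxy : ‖x - y‖ ≤ ‖ξ - η‖ := by
      rw [hxy]
      calc ‖symPart (ξ - η)‖ = (1/2 : ℝ) * ‖(ξ - η) + (ξ - η)ᵀ‖ := by
            rw [symPart, norm_smul]; simp
        _ ≤ (1/2 : ℝ) * (‖ξ - η‖ + ‖(ξ - η)ᵀ‖) :=
            mul_le_mul_of_nonneg_left (norm_add_le _ _) (by norm_num)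
        _ = ‖ξ - η‖ := by rw [Matrix.frobenius_norm_transpose]; ring
    have hQd : Real.sqrt (finner (A (x - y)) (x - y)) ≤ Real.sqrt A.opNorm * ‖ξ - η‖ :=
      (hQbound (x - y)).trans (by
        have := Real.sqrt_nonneg A.opNorm
        exact mul_le_mul_of_nonneg_left hnxy this)
    have hyxT : (y - x)ᵀ = y - x := by rw [Matrix.transpose_sub, hxT, hyT]
    have h1 : a ≤ Real.sqrt (finner (A (x - y)) (x - y)) + b := by
      have := hQadd (x - y) y hxyT hyT
      simpa using this
    have hQsymm : finner (A (y - x)) (y - x) = finner (A (x - y)) (x - y) := by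
      have : y - x = (-1 : ℝ) • (x - y) := by simp
      rw [this, _root_.map_smul, finner_smul_left, finner_smul_right]; ring
    have h2 : b ≤ Real.sqrt (finner (A (x - y)) (x - y)) + a := by
      have := hQadd (y - x) x hyxT hxT
      rw [hQsymm] at this
      simpa using this
    rw [abs_sub_le_iff]
    constructor <;> [skip; skip] <;> linarith [hQd,
      Real.sqrt_nonneg (finner (A (x - y)) (x - y))]
  -- mean value estimate for rpow
  have hmv : |a ^ p - b ^ p| ≤ p * (a + b) ^ (p - 1) * |a - b| := by
    rcases le_total b a with hba | hab
    · rw [abs_of_nonneg (sub_nonneg.2 (Real.rpow_le_rpow hb0 hba (by linarith))),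
        abs_of_nonneg (sub_nonneg.2 hba)]
      exact rpow_mvt hp hb0 hba
    · rw [abs_sub_comm, abs_sub_comm a b,
        abs_of_nonneg (sub_nonneg.2 (Real.rpow_le_rpow ha0 hab (by linarith))),
        abs_of_nonneg (sub_nonneg.2 hab)]
      have := rpow_mvt hp ha0 hab
      calc b ^ p - a ^ p ≤ p * (b + a) ^ (p - 1) * (b - a) := this
        _ = p * (a + b) ^ (p - 1) * (b - a) := by rw [add_comm b a]
  -- rewrite the goal in terms of a, b
  have hQx0 := hApos x hxT
  have hQy0 := hApos y hyT
  have e1 : a ^ p = finner (A x) x ^ (p / 2) := by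
    rw [ha, Real.sqrt_eq_rpow, ← Real.rpow_mul hQx0, show (1/2:ℝ) * p = p/2 by ring]
  have e2 : b ^ p = finner (A y) y ^ (p / 2) := by
    rw [hb, Real.sqrt_eq_rpow, ← Real.rpow_mul hQy0, show (1/2:ℝ) * p = p/2 by ring]
  have e3 : finner (A x) x ^ ((1:ℝ) / 2) = a := (Real.sqrt_eq_rpow _).symm
  have e4 : finner (A y) y ^ ((1:ℝ) / 2) = b := (Real.sqrt_eq_rpow _).symm
  have e5 : A.opNorm ^ ((1:ℝ) / 2) = Real.sqrt A.opNorm := (Real.sqrt_eq_rpow _).symm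
  rw [← e1, ← e2, e3, e4, e5]
  calc |a ^ p - b ^ p| ≤ p * (a + b) ^ (p - 1) * |a - b| := hmv
    _ ≤ p * (a + b) ^ (p - 1) * (Real.sqrt A.opNorm * ‖ξ - η‖) := by
        refine mul_le_mul_of_nonneg_left hdiff ?_
        exact mul_nonneg (by linarith) (Real.rpow_nonneg (by linarith) _)
    _ = p * (a + b) ^ (p - 1) * Real.sqrt A.opNorm * ‖ξ - η‖ := by ring
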